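/- Let σ > 0, let n be a nonzero integer, and let λ ∈ ℝ with λ < −n². Suppose (y, h) is a nontrivial solution of the projected eigensystem with parameters (σ, n, λ), i.e. y is not identically zero on [−1, 1] or h ≠ 0. Set ν := √(−λ − n²). Then cos(2ν) ≠ 0, the transcendental equation (ν² + n²)·sin(2ν) = σ·n²·ν·cos(2ν) holds, and there exists a nonzero constant c ∈ ℝ such that y(x) = c·sin(ν·(1 + x)) for all x ∈ [−1, 1]. -/

import Mathlib

open Set

/-- Structure of the eigenfunctions for eigenvalues `λ < -n²`: if `(y, h)` is a nontrivial
solution of the projected eigensystem with parameters `(σ, n, λ)` and `ν := √(-λ - n²)`, then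
`cos(2ν) ≠ 0`, the transcendental equation `(ν² + n²)·sin(2ν) = σ·n²·ν·cos(2ν)` holds, and
`y(x) = c·sin(ν(1+x))` on `[-1,1]` for some nonzero constant `c`. -/
theorem stmt5 (σ : ℝ) (hσ : 0 < σ) (n : ℤ) (hn : n ≠ 0) (lam : ℝ) (hlam : lam < -(n:ℝ)^2)
    (y y' y'' : ℝ → ℝ) (h : ℝ)
    (hy' : ∀ x ∈ Icc (-1:ℝ) 1, HasDerivWithinAt y (y' x) (Icc (-1:ℝ) 1) x)
    (hy'' : ∀ x ∈ Icc (-1:ℝ) 1, HasDerivWithinAt y' (y'' x) (Icc (-1:ℝ) 1) x)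
    (hcont : ContinuousOn y'' (Icc (-1:ℝ) 1))
    (heq : ∀ x ∈ Icc (-1:ℝ) 1, lam * y x - y'' x + (n:ℝ)^2 * y x = 0)
    (hbc : lam * h = y' 1)
    (hbot : y (-1) = 0)
    (htop : y 1 = -σ * (n:ℝ)^2 * h)
    (hnontriv : (¬ ∀ x ∈ Icc (-1:ℝ) 1, y x = 0) ∨ h ≠ 0) :
    Real.cos (2 * Real.sqrt (-lam - (n:ℝ)^2)) ≠ 0 ∧
    (Real.sqrt (-lam - (n:ℝ)^2) ^ 2 + (n:ℝ)^2) * Real.sin (2 * Real.sqrt (-lam - (n:ℝ)^2))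
      = σ * (n:ℝ)^2 * Real.sqrt (-lam - (n:ℝ)^2) * Real.cos (2 * Real.sqrt (-lam - (n:ℝ)^2)) ∧
    ∃ c : ℝ, c ≠ 0 ∧
      ∀ x ∈ Icc (-1:ℝ) 1, y x = c * Real.sin (Real.sqrt (-lam - (n:ℝ)^2) * (1 + x)) := by
  set ν := Real.sqrt (-lam - (n:ℝ)^2) with hνdef
  have hnR : ((n:ℝ)) ≠ 0 := by exact_mod_cast hn
  have hn2 : (0:ℝ) < (n:ℝ)^2 := by positivity
  have hpos : 0 < -lam - (n:ℝ)^2 := by linarith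
  have hν : 0 < ν := Real.sqrt_pos.mpr hpos
  have hν2 : ν^2 = -lam - (n:ℝ)^2 := Real.sq_sqrt hpos.le
  have hlam0 : lam ≠ 0 := by nlinarith
  have hyc : ContinuousOn y (Icc (-1:ℝ) 1) := fun x hx => (hy' x hx).continuousWithinAt
  have hy'c : ContinuousOn y' (Icc (-1:ℝ) 1) := fun x hx => (hy'' x hx).continuousWithinAt
  have hyy'' : ∀ x ∈ Icc (-1:ℝ) 1, y'' x = -(ν^2) * y x := by
    intro x hx
    have := heq x hx
    rw [hν2]; linarith
  have hsind : ∀ x : ℝ, HasDerivAt (fun t => Real.sin (ν*(1+t))) (Real.cos (ν*(1+x)) * ν) x := by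
    intro x
    have h1 : HasDerivAt (fun t : ℝ => ν*(1+t)) ν x := by
      simpa using ((hasDerivAt_id x).const_add (1:ℝ)).const_mul ν
    exact h1.sin
  have hcosd : ∀ x : ℝ, HasDerivAt (fun t => Real.cos (ν*(1+t))) (-Real.sin (ν*(1+x)) * ν) x := by
    intro x
    have h1 : HasDerivAt (fun t : ℝ => ν*(1+t)) ν x := by
      simpa using ((hasDerivAt_id x).const_add (1:ℝ)).const_mul ν
    exact h1.cos
  -- the quantity a(x) is constant (≡ 0)
  have ha0 : ∀ x ∈ Icc (-1:ℝ) 1,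
      ν * y x * Real.cos (ν*(1+x)) - y' x * Real.sin (ν*(1+x)) = 0 := by
    have hacont : ContinuousOn
        (fun t => ν * y t * Real.cos (ν*(1+t)) - y' t * Real.sin (ν*(1+t))) (Icc (-1:ℝ) 1) := by
      apply ContinuousOn.sub
      · exact (continuousOn_const.mul hyc).mul
          ((Real.continuous_cos.comp (continuous_const.mul (continuous_const.add continuous_id))).continuousOn)
      · exact hy'c.mul ((Real.continuous_sin.comp (continuous_const.mul (continuous_const.add continuous_id))).continuousOn)
    have haderiv : ∀ x ∈ Icc (-1:ℝ) 1, HasDerivWithinAt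
        (fun t => ν * y t * Real.cos (ν*(1+t)) - y' t * Real.sin (ν*(1+t)))
        0 (Icc (-1:ℝ) 1) x := by
      intro x hx
      have H := (((hy' x hx).const_mul ν).mul ((hcosd x).hasDerivWithinAt)).sub
        ((hy'' x hx).mul ((hsind x).hasDerivWithinAt))
      refine H.congr_deriv ?_
      rw [hyy'' x hx]; ring
    have hconst := constant_of_has_deriv_right_zero hacont
      (fun x hx => (haderiv x (Ico_subset_Icc_self hx)).mono_of_mem_nhdsWithin
        (Icc_mem_nhdsGE_of_mem hx))
    intro x hx
    have := hconst x hx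
    rw [this]
    norm_num [hbot]
  -- the quantity b(x) is constant (≡ y'(-1))
  have hbk : ∀ x ∈ Icc (-1:ℝ) 1,
      ν * y x * Real.sin (ν*(1+x)) + y' x * Real.cos (ν*(1+x)) = y' (-1) := by
    have hbcont : ContinuousOn
        (fun t => ν * y t * Real.sin (ν*(1+t)) + y' t * Real.cos (ν*(1+t))) (Icc (-1:ℝ) 1) := by
      apply ContinuousOn.add
      · exact (continuousOn_const.mul hyc).mul
          ((Real.continuous_sin.comp (continuous_const.mul (continuous_const.add continuous_id))).continuousOn)
      · exact hy'c.mul ((Real.continuous_cos.comp (continuous_const.mul (continuous_const.add continuous_id))).continuousOn)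
    have hbderiv : ∀ x ∈ Icc (-1:ℝ) 1, HasDerivWithinAt
        (fun t => ν * y t * Real.sin (ν*(1+t)) + y' t * Real.cos (ν*(1+t)))
        0 (Icc (-1:ℝ) 1) x := by
      intro x hx
      have H := (((hy' x hx).const_mul ν).mul ((hsind x).hasDerivWithinAt)).add
        ((hy'' x hx).mul ((hcosd x).hasDerivWithinAt))
      refine H.congr_deriv ?_
      rw [hyy'' x hx]; ring
    have hconst := constant_of_has_deriv_right_zero hbcont
      (fun x hx => (hbderiv x (Ico_subset_Icc_self hx)).mono_of_mem_nhdsWithin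
        (Icc_mem_nhdsGE_of_mem hx))
    intro x hx
    have := hconst x hx
    rw [this]
    norm_num [hbot]
  set k := y' (-1) with hkdef
  have hysin : ∀ x ∈ Icc (-1:ℝ) 1, ν * y x = k * Real.sin (ν*(1+x)) := by
    intro x hx
    have ea := ha0 x hx
    have eb := hbk x hx
    have pyth := Real.sin_sq_add_cos_sq (ν*(1+x))
    linear_combination Real.cos (ν*(1+x)) * ea + Real.sin (ν*(1+x)) * eb
      - (ν * y x) * pyth
  have hy'cos : ∀ x ∈ Icc (-1:ℝ) 1, y' x = k * Real.cos (ν*(1+x)) := by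
    intro x hx
    have ea := ha0 x hx
    have eb := hbk x hx
    have pyth := Real.sin_sq_add_cos_sq (ν*(1+x))
    linear_combination (-Real.sin (ν*(1+x))) * ea + Real.cos (ν*(1+x)) * eb
      - (y' x) * pyth
  have h1mem : (1:ℝ) ∈ Icc (-1:ℝ) 1 := by norm_num
  have hθ1 : ν * (1 + 1) = 2 * ν := by ring
  have hy1 : ν * y 1 = k * Real.sin (2*ν) := by
    have := hysin 1 h1mem; rwa [hθ1] at this
  have hy'1 : y' 1 = k * Real.cos (2*ν) := by
    have := hy'cos 1 h1mem; rwa [hθ1] at this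
  have hk0 : k ≠ 0 := by
    intro hk
    have hyz : ∀ x ∈ Icc (-1:ℝ) 1, y x = 0 := by
      intro x hx
      have := hysin x hx
      rw [hk] at this
      have : ν * y x = 0 := by linarith [this]; 
      exact (mul_eq_zero.mp this).resolve_left hν.ne' 
    have hh : h = 0 := by
      have : lam * h = 0 := by rw [hbc, hy'1, hk]; ring
      exact (mul_eq_zero.mp this).resolve_left hlam0
    rcases hnontriv with hcase | hcase
    · exact hcase hyz
    · exact hcase hh
  have hcosne : Real.cos (2*ν) ≠ 0 := by
    intro hc
    have hh : h = 0 := by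
      have : lam * h = 0 := by rw [hbc, hy'1, hc]; ring
      exact (mul_eq_zero.mp this).resolve_left hlam0
    have hy1z : y 1 = 0 := by rw [htop, hh]; ring
    have hsz : k * Real.sin (2*ν) = 0 := by rw [← hy1, hy1z]; ring
    have pyth := Real.sin_sq_add_cos_sq (2*ν)
    have hsin2 : Real.sin (2*ν) ≠ 0 := by
      intro hs
      rw [hs, hc] at pyth
      norm_num at pyth
    exact hk0 ((mul_eq_zero.mp hsz).resolve_right hsin2)
  refine ⟨hcosne, ?_, ?_⟩
  · -- transcendental equation
    have hbc2 : lam * h = k * Real.cos (2*ν) := hbc.trans hy'1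
    have e1 : ν * (-σ * (n:ℝ)^2 * h) = k * Real.sin (2*ν) := by
      rw [← htop]; exact hy1
    have hkey : k * ((-lam) * Real.sin (2*ν)) = k * (σ * (n:ℝ)^2 * ν * Real.cos (2*ν)) := by
      linear_combination lam * e1 + σ * (n:ℝ)^2 * ν * hbc2
    have hkey2 := mul_left_cancel₀ hk0 hkey
    linear_combination hkey2 + Real.sin (2*ν) * hν2
  · refine ⟨k / ν, div_ne_zero hk0 hν.ne', ?_⟩
    intro x hx
    have := hysin x hx
    field_simp
    linarith [this]
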